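/- Eventual leadership from counter behavior (conclusion of Theorem 2, Closure of the self-stabilizing Ω failure detector). Let n ≥ 1, let C be a nonempty Finset of Fin n (the correct processors), and let PL be a nonempty Finset with PL ⊆ C (the potential leaders). For each i ∈ C let c i : ℕ → Fin n → ℕ give processor i's counter array over time. Suppose there exists M : Fin n → ℕ such that: (i) for every k ∈ PL and every i ∈ C, eventually (for all sufficiently large t) c i t k = M k; and (ii) for every k ∉ PL and every i ∈ C, the sequence t ↦ c i t k tends to infinity. Then there exists ℓ ∈ PL such that eventually, for every i ∈ C and every k ≠ ℓ, the pair (c i t ℓ, ℓ) is lexicographically smaller than (c i t k, k); i.e., all correct processors eventually and permanently return the same correct leader ℓ from the leader() operation. -/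

import Mathlib

open Filter

/-- Eventual leadership from counter behavior (conclusion of Theorem 2,
Closure of the self-stabilizing Ω failure detector). -/
theorem eventual_leadership (n : ℕ) (hn : 1 ≤ n)
    (C : Finset (Fin n)) (hC : C.Nonempty)
    (PL : Finset (Fin n)) (hPL : PL.Nonempty) (hPLC : PL ⊆ C)
    (c : Fin n → ℕ → Fin n → ℕ) (M : Fin n → ℕ)
    (hbounded : ∀ k ∈ PL, ∀ i ∈ C, ∀ᶠ t in atTop, c i t k = M k)
    (hunbounded : ∀ k ∉ PL, ∀ i ∈ C, Tendsto (fun t => c i t k) atTop atTop) :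
    ∃ ℓ ∈ PL, ∀ᶠ t in atTop, ∀ i ∈ C, ∀ k, k ≠ ℓ →
      toLex ((c i t ℓ, ℓ) : ℕ × Fin n) < toLex ((c i t k, k) : ℕ × Fin n) := by
  obtain ⟨ℓ, hℓPL, hmin⟩ :=
    PL.exists_min_image (fun k => toLex ((M k, k) : ℕ × Fin n)) hPL
  refine ⟨ℓ, hℓPL, ?_⟩
  have hev : ∀ᶠ t in atTop, ∀ i ∈ C, ∀ k,
      (k ∈ PL → c i t k = M k) ∧ (k ∉ PL → M ℓ < c i t k) := by
    rw [eventually_all_finset]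
    intro i hi
    rw [eventually_all]
    intro k
    by_cases hk : k ∈ PL
    · filter_upwards [hbounded k hk i hi] with t ht
      exact ⟨fun _ => ht, fun h => absurd hk h⟩
    · filter_upwards [(hunbounded k hk i hi).eventually_gt_atTop (M ℓ)] with t ht
      exact ⟨fun h => absurd h hk, fun _ => ht⟩
  filter_upwards [hev] with t ht i hi k hk
  obtain ⟨h1, h2⟩ := ht i hi k
  have hℓ := (ht i hi ℓ).1 hℓPL
  by_cases hkPL : k ∈ PL
  · rw [hℓ, h1 hkPL]
    rcases lt_or_eq_of_le (hmin k hkPL) with h | h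
    · exact h
    · exfalso
      have : k = ℓ := congrArg (fun p => (ofLex p).2) h.symm
      exact hk this
  · rw [hℓ]
    exact (Prod.Lex.lt_iff).mpr (Or.inl (h2 hkPL))
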